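/- Let ε ∈ (0, 1), a ∈ [0, 1], and let Y be geometric with parameter ε (P(Y = k) = ε^{k−1}(1 − ε), k ≥ 1) and X₁, X₂, … be i.i.d. G(a) random variables, independent of Y. Set Z = 2^{⌈log₂ Y⌉} Σ_{i=1}^Y X_i. Then for all x ≥ 4, P(Z ≥ x) ≤ (1 − ε)P(X₁ ≥ x) + Σ_{k=2}^∞ (1 − ε)ε^{k−1} · 4k³(k−1)² · (a + 1)²/(a + x)². -/

import Mathlib

open MeasureTheory ProbabilityTheory

/-- Let `ε ∈ (0, 1)`, `a ∈ [0, 1]`, `Y` geometric with parameter `ε`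
(`P(Y = k) = ε^{k−1}(1 − ε)` for `k ≥ 1`), and `X₁, X₂, …` i.i.d. `G(a)` (Pareto on
`[1, ∞)`) random variables, independent of `Y`. Set `Z = 2^{⌈log₂ Y⌉} Σ_{i=1}^{Y} Xᵢ`.
Then for all `x ≥ 4`,
`P(Z ≥ x) ≤ (1 − ε)P(X₁ ≥ x) + Σ_{k=2}^∞ (1 − ε)ε^{k−1}·4k³(k−1)²·(a + 1)²/(a + x)²`
(the series below being reindexed by `k ↦ k + 2`). -/
theorem geometric_pareto_blowup_tail_bound
    (ε a : ℝ) (hε : ε ∈ Set.Ioo (0 : ℝ) 1) (ha : a ∈ Set.Icc (0 : ℝ) 1)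
    {Ω : Type*} [MeasurableSpace Ω] (μ : Measure Ω) [IsProbabilityMeasure μ]
    (Y : Ω → ℕ) (X : ℕ → Ω → ℝ)
    (hYmeas : Measurable Y) (hXmeas : ∀ i, Measurable (X i))
    (hY : ∀ k : ℕ, 1 ≤ k → μ {ω | Y ω = k} = ENNReal.ofReal (ε ^ (k - 1) * (1 - ε)))
    (hY0 : μ {ω | Y ω = 0} = 0)
    (hX : ∀ i, ∀ x : ℝ, 1 ≤ x → μ {ω | x ≤ X i ω} =
      ENNReal.ofReal ((a + 1) ^ 2 / (a + x) ^ 2))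
    (hXs : ∀ i, μ {ω | X i ω < 1} = 0)
    (hindep : iIndepFun
      (fun o : Option ℕ => o.elim (fun ω => (Y ω : ℝ)) X) μ) :
    ∀ x : ℝ, 4 ≤ x →
      μ {ω | x ≤ (2 : ℝ) ^ (Nat.clog 2 (Y ω)) * ∑ i ∈ Finset.range (Y ω), X i ω} ≤
        ENNReal.ofReal ((1 - ε) * ((a + 1) ^ 2 / (a + x) ^ 2)) +
          ∑' k : ℕ, ENNReal.ofReal
            ((1 - ε) * ε ^ (k + 1) * (4 * ((k : ℝ) + 2) ^ 3 * ((k : ℝ) + 1) ^ 2) *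
              ((a + 1) ^ 2 / (a + x) ^ 2)) := by
  obtain ⟨hε0, hε1⟩ := hε
  obtain ⟨ha0, ha1⟩ := ha
  intro x hx
  have hx0 : (0 : ℝ) < x := by linarith
  set S := {ω | x ≤ (2 : ℝ) ^ (Nat.clog 2 (Y ω)) * ∑ i ∈ Finset.range (Y ω), X i ω}
    with hSdef
  -- independence of Y with each X i
  have hind : ∀ (i k : ℕ) (t : ℝ),
      μ ({ω | Y ω = k} ∩ {ω | t ≤ X i ω}) = μ {ω | Y ω = k} * μ {ω | t ≤ X i ω} := by
    intro i k t
    have h := (hindep.indepFun (show (none : Option ℕ) ≠ some i by simp))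
    have h2 := h.measure_inter_preimage_eq_mul {(k : ℝ)} (Set.Ici t)
      (measurableSet_singleton _) measurableSet_Ici
    have e1 : (fun ω => (Y ω : ℝ)) ⁻¹' {(k : ℝ)} = {ω | Y ω = k} := by
      ext ω; simp [Nat.cast_inj]
    have e2 : X i ⁻¹' Set.Ici t = {ω | t ≤ X i ω} := rfl
    simpa [e1, e2] using h2
  -- the Y = 1 term
  have key1 : μ (S ∩ {ω | Y ω = 1}) ≤
      ENNReal.ofReal ((1 - ε) * ((a + 1) ^ 2 / (a + x) ^ 2)) := by
    have hincl : S ∩ {ω | Y ω = 1} ⊆ {ω | Y ω = 1} ∩ {ω | x ≤ X 0 ω} := by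
      rintro ω ⟨hωS, hωY⟩
      simp only [Set.mem_setOf_eq] at hωY
      refine ⟨hωY, ?_⟩
      have := hωS
      simp only [hSdef, Set.mem_setOf_eq, hωY, Nat.clog_one_right, pow_zero, one_mul,
        Finset.range_one, Finset.sum_singleton] at this
      exact this
    calc μ (S ∩ {ω | Y ω = 1}) ≤ μ ({ω | Y ω = 1} ∩ {ω | x ≤ X 0 ω}) := measure_mono hincl
      _ = μ {ω | Y ω = 1} * μ {ω | x ≤ X 0 ω} := hind 0 1 x
      _ = ENNReal.ofReal (ε ^ (1 - 1) * (1 - ε)) *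
            ENNReal.ofReal ((a + 1) ^ 2 / (a + x) ^ 2) := by
          rw [hY 1 le_rfl, hX 0 x (by linarith)]
      _ = ENNReal.ofReal ((1 - ε) * ((a + 1) ^ 2 / (a + x) ^ 2)) := by
          rw [← ENNReal.ofReal_mul (by simp only [Nat.sub_self, pow_zero]; linarith)]
          norm_num
  -- per-k bound for k = j + 2
  have key : ∀ j : ℕ, μ (S ∩ {ω | Y ω = j + 2}) ≤
      ENNReal.ofReal ((1 - ε) * ε ^ (j + 1) *
        (4 * ((j : ℝ) + 2) ^ 3 * ((j : ℝ) + 1) ^ 2) * ((a + 1) ^ 2 / (a + x) ^ 2)) := by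
    intro j
    set k : ℕ := j + 2 with hk
    set m : ℝ := 2 * ((j : ℝ) + 1) * ((j : ℝ) + 2) with hm
    have hj0 : (0 : ℝ) ≤ (j : ℝ) := Nat.cast_nonneg j
    have hm1 : (1 : ℝ) ≤ m := by nlinarith
    have hm0 : (0 : ℝ) < m := by linarith
    set t' : ℝ := max (x / m) 1 with ht'
    have ht'1 : (1 : ℝ) ≤ t' := le_max_right _ _
    -- the power bound: 2 ^ clog 2 k ≤ 2 * (k - 1)   (in ℕ)
    have hclog : (2 : ℕ) ^ Nat.clog 2 k ≤ 2 * (k - 1) := by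
      have h1 : 0 < Nat.clog 2 k := Nat.clog_pos one_lt_two (by omega)
      have h2 : (2 : ℕ) ^ (Nat.clog 2 k - 1) < k :=
        Nat.pow_pred_clog_lt_self (x := k) one_lt_two (by omega)
      have h3 : (2 : ℕ) ^ Nat.clog 2 k = 2 * 2 ^ (Nat.clog 2 k - 1) := by
        conv_lhs => rw [show Nat.clog 2 k = (Nat.clog 2 k - 1) + 1 by omega]
        ring
      omega
    -- inclusion into a union
    have hincl : S ∩ {ω | Y ω = k} ⊆
        ⋃ i ∈ Finset.range k, (({ω | Y ω = k} ∩ {ω | t' ≤ X i ω}) ∪ {ω | X i ω < 1}) := by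
      rintro ω ⟨hωS, hωY⟩
      simp only [Set.mem_setOf_eq] at hωY
      have hωS' : x ≤ (2 : ℝ) ^ (Nat.clog 2 k) * ∑ i ∈ Finset.range k, X i ω := by
        simpa [hSdef, hωY] using hωS
      have hex : ∃ i ∈ Finset.range k, x / m ≤ X i ω := by
        by_contra hcon
        push_neg at hcon
        have hsum : ∑ i ∈ Finset.range k, X i ω < ∑ _i ∈ Finset.range k, x / m :=
          Finset.sum_lt_sum_of_nonempty (by simp [hk]) hcon
        have hcard : ∑ _i ∈ Finset.range k, (x / m) = (k : ℝ) * (x / m) := by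
          simp [Finset.sum_const, mul_comm]
        have hc : ((2 : ℝ) ^ Nat.clog 2 k) ≤ 2 * ((k : ℝ) - 1) := by
          have hcast : ((2 ^ Nat.clog 2 k : ℕ) : ℝ) ≤ ((2 * (k - 1) : ℕ) : ℝ) := by
            exact_mod_cast hclog
          rw [Nat.cast_pow, Nat.cast_mul, Nat.cast_sub (by omega : 1 ≤ k)] at hcast
          push_cast at hcast
          linarith
        have hkr : (k : ℝ) = (j : ℝ) + 2 := by push_cast [hk]; ring
        have hcpos : (0 : ℝ) < (2 : ℝ) ^ Nat.clog 2 k := by positivity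
        have hsum0 : ∑ i ∈ Finset.range k, X i ω < (k : ℝ) * (x / m) := by
          rw [← hcard]; exact hsum
        have h5 : (2 : ℝ) ^ Nat.clog 2 k * ∑ i ∈ Finset.range k, X i ω
            < (2 * ((k : ℝ) - 1)) * ((k : ℝ) * (x / m)) := by
          calc (2 : ℝ) ^ Nat.clog 2 k * ∑ i ∈ Finset.range k, X i ω
              < (2 : ℝ) ^ Nat.clog 2 k * ((k : ℝ) * (x / m)) :=
                (mul_lt_mul_iff_right₀ hcpos).mpr hsum0
            _ ≤ (2 * ((k : ℝ) - 1)) * ((k : ℝ) * (x / m)) := by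
                apply mul_le_mul_of_nonneg_right hc
                have hkpos : (0 : ℝ) < (k : ℝ) := by rw [hkr]; positivity
                positivity
        have heq : (2 * ((k : ℝ) - 1)) * ((k : ℝ) * (x / m)) = x := by
          rw [hkr, hm]; field_simp; ring
        rw [heq] at h5
        linarith
      obtain ⟨i, hi, hti⟩ := hex
      refine Set.mem_biUnion hi ?_
      by_cases hx1 : X i ω < 1
      · exact Or.inr hx1
      · push_neg at hx1
        exact Or.inl ⟨hωY, max_le hti hx1⟩
    -- the real number inequality
    have hxm : x ≤ m * t' := by
      rcases le_total (x / m) 1 with h | h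
      · have : t' = 1 := max_eq_right h
        rw [this, mul_one]
        calc x = m * (x / m) := by field_simp
          _ ≤ m * 1 := by exact mul_le_mul_of_nonneg_left h (le_of_lt hm0)
          _ = m := mul_one m
      · have : t' = x / m := max_eq_left h
        rw [this]; field_simp; exact le_rfl
    have haxm : a + x ≤ m * (a + t') := by nlinarith
    have hax0 : (0 : ℝ) < a + x := by linarith
    have hat0 : (0 : ℝ) < a + t' := by linarith
    have hdiv : (a + 1) ^ 2 / (a + t') ^ 2 ≤
        m ^ 2 * ((a + 1) ^ 2 / (a + x) ^ 2) := by
      rw [div_le_iff₀ (by positivity)]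
      have h1 : (a + x) ^ 2 ≤ m ^ 2 * (a + t') ^ 2 := by nlinarith
      have h2 : (0 : ℝ) ≤ (a + 1) ^ 2 := by positivity
      have h3 : (0 : ℝ) < (a + t') ^ 2 := by positivity
      rw [div_eq_mul_inv]
      have := mul_le_mul_of_nonneg_left h1 h2
      calc (a + 1) ^ 2 = (a + 1) ^ 2 * (a + x) ^ 2 * ((a + x) ^ 2)⁻¹ := by
            field_simp
        _ ≤ (a + 1) ^ 2 * (m ^ 2 * (a + t') ^ 2) * ((a + x) ^ 2)⁻¹ := by
            apply mul_le_mul_of_nonneg_right _ (by positivity)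
            nlinarith
        _ = m ^ 2 * ((a + 1) ^ 2 * ((a + x) ^ 2)⁻¹) * (a + t') ^ 2 := by ring
    have h1e : (0 : ℝ) ≤ 1 - ε := by linarith
    have hep : (0 : ℝ) ≤ ε ^ (j + 1) := by positivity
    have hdivnn : (0 : ℝ) ≤ (a + 1) ^ 2 / (a + t') ^ 2 := by positivity
    -- per-i measure bound
    have honei : ∀ i : ℕ,
        μ (({ω | Y ω = k} ∩ {ω | t' ≤ X i ω}) ∪ {ω | X i ω < 1}) ≤
          ENNReal.ofReal (ε ^ (j + 1) * (1 - ε) * ((a + 1) ^ 2 / (a + t') ^ 2)) := by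
      intro i
      calc μ (({ω | Y ω = k} ∩ {ω | t' ≤ X i ω}) ∪ {ω | X i ω < 1})
          ≤ μ ({ω | Y ω = k} ∩ {ω | t' ≤ X i ω}) + μ {ω | X i ω < 1} :=
            measure_union_le _ _
        _ = μ ({ω | Y ω = k} ∩ {ω | t' ≤ X i ω}) := by rw [hXs i, add_zero]
        _ = μ {ω | Y ω = k} * μ {ω | t' ≤ X i ω} := hind i k t'
        _ = ENNReal.ofReal (ε ^ (j + 1) * (1 - ε)) *
              ENNReal.ofReal ((a + 1) ^ 2 / (a + t') ^ 2) := by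
            rw [hY k (by omega), hX i t' ht'1]
            congr 2
        _ = ENNReal.ofReal (ε ^ (j + 1) * (1 - ε) * ((a + 1) ^ 2 / (a + t') ^ 2)) := by
            rw [← ENNReal.ofReal_mul (mul_nonneg hep h1e)]
    -- put it together
    calc μ (S ∩ {ω | Y ω = k})
        ≤ μ (⋃ i ∈ Finset.range k,
            (({ω | Y ω = k} ∩ {ω | t' ≤ X i ω}) ∪ {ω | X i ω < 1})) := measure_mono hincl
      _ ≤ ∑ i ∈ Finset.range k,
            μ (({ω | Y ω = k} ∩ {ω | t' ≤ X i ω}) ∪ {ω | X i ω < 1}) :=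
          measure_biUnion_finset_le _ _
      _ ≤ ∑ _i ∈ Finset.range k,
            ENNReal.ofReal (ε ^ (j + 1) * (1 - ε) * ((a + 1) ^ 2 / (a + t') ^ 2)) :=
          Finset.sum_le_sum fun i _ => honei i
      _ = (k : ℕ) • ENNReal.ofReal (ε ^ (j + 1) * (1 - ε) * ((a + 1) ^ 2 / (a + t') ^ 2)) := by
          rw [Finset.sum_const, Finset.card_range]
      _ = ENNReal.ofReal ((k : ℝ) * (ε ^ (j + 1) * (1 - ε) * ((a + 1) ^ 2 / (a + t') ^ 2))) := by
          rw [nsmul_eq_mul, ← ENNReal.ofReal_natCast k, ← ENNReal.ofReal_mul (Nat.cast_nonneg k)]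
      _ ≤ ENNReal.ofReal ((1 - ε) * ε ^ (j + 1) *
            (4 * ((j : ℝ) + 2) ^ 3 * ((j : ℝ) + 1) ^ 2) * ((a + 1) ^ 2 / (a + x) ^ 2)) := by
          apply ENNReal.ofReal_le_ofReal
          have hkr : (k : ℝ) = (j : ℝ) + 2 := by push_cast [hk]; ring
          rw [hkr]
          calc ((j : ℝ) + 2) * (ε ^ (j + 1) * (1 - ε) * ((a + 1) ^ 2 / (a + t') ^ 2))
              = ((j : ℝ) + 2) * (ε ^ (j + 1) * (1 - ε)) * ((a + 1) ^ 2 / (a + t') ^ 2) := by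
                ring
            _ ≤ ((j : ℝ) + 2) * (ε ^ (j + 1) * (1 - ε)) *
                  (m ^ 2 * ((a + 1) ^ 2 / (a + x) ^ 2)) := by
                exact mul_le_mul_of_nonneg_left hdiv
                  (mul_nonneg (by positivity) (mul_nonneg hep h1e))
            _ = (1 - ε) * ε ^ (j + 1) *
                  (4 * ((j : ℝ) + 2) ^ 3 * ((j : ℝ) + 1) ^ 2) *
                  ((a + 1) ^ 2 / (a + x) ^ 2) := by
                rw [hm]; ring
  -- decomposition of S
  have hsub : S ⊆ {ω | Y ω = 0} ∪
      ((S ∩ {ω | Y ω = 1}) ∪ ⋃ j : ℕ, S ∩ {ω | Y ω = j + 2}) := by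
    intro ω hω
    match h : Y ω with
    | 0 => exact Or.inl h
    | 1 => exact Or.inr (Or.inl ⟨hω, h⟩)
    | (n + 2) => exact Or.inr (Or.inr (Set.mem_iUnion.mpr ⟨n, hω, h⟩))
  calc μ S ≤ μ ({ω | Y ω = 0} ∪
        ((S ∩ {ω | Y ω = 1}) ∪ ⋃ j : ℕ, S ∩ {ω | Y ω = j + 2})) := measure_mono hsub
    _ ≤ μ {ω | Y ω = 0} +
        μ ((S ∩ {ω | Y ω = 1}) ∪ ⋃ j : ℕ, S ∩ {ω | Y ω = j + 2}) := measure_union_le _ _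
    _ ≤ μ {ω | Y ω = 0} +
        (μ (S ∩ {ω | Y ω = 1}) + μ (⋃ j : ℕ, S ∩ {ω | Y ω = j + 2})) := by
        gcongr; exact measure_union_le _ _
    _ ≤ 0 + (μ (S ∩ {ω | Y ω = 1}) + ∑' j : ℕ, μ (S ∩ {ω | Y ω = j + 2})) := by
        rw [hY0]; gcongr; exact measure_iUnion_le _
    _ ≤ ENNReal.ofReal ((1 - ε) * ((a + 1) ^ 2 / (a + x) ^ 2)) +
          ∑' k : ℕ, ENNReal.ofReal
            ((1 - ε) * ε ^ (k + 1) * (4 * ((k : ℝ) + 2) ^ 3 * ((k : ℝ) + 1) ^ 2) *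
              ((a + 1) ^ 2 / (a + x) ^ 2)) := by
        rw [zero_add]
        exact add_le_add key1 (ENNReal.tsum_le_tsum key)
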